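/- arXiv:1209.2546 — 2 statements merged into one kernel-verified Lean document; each statement's English description precedes it below -/
import Mathlib

section
/- For all nonnegative integers i and j, the integral ∫₀¹ x^i (1-x)^j log(x) dx multiplied by Γ(i+j+2)/(Γ(i+1)Γ(j+1)) equals H(i) - H(i+j+1), where H(n) = ∑_{k=1}^n 1/k is the n-th harmonic number (H(0)=0). -/
/-- The `n`-th harmonic number. -/
noncomputable def H (n : ℕ) : ℝ := ∑ k ∈ Finset.range n, (1 : ℝ) / (k + 1)

open Real MeasureTheory intervalIntegral Set

lemma H_succ (n : ℕ) : H (n + 1) = H n + 1 / ((n : ℝ) + 1) := by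
  simp [H, Finset.sum_range_succ]

lemma aux_integrable (i j : ℕ) :
    IntervalIntegrable (fun x : ℝ => x ^ i * (1 - x) ^ j * Real.log x) volume 0 1 := by
  apply IntervalIntegrable.mono_fun
    ((intervalIntegral.intervalIntegrable_rpow' (r := -(1/2)) (by norm_num)).const_mul 2)
  · exact (((continuous_pow i).mul ((continuous_const.sub continuous_id).pow j)).measurable.mul
      Real.measurable_log).aestronglyMeasurable
  · rw [uIoc_of_le (by norm_num : (0:ℝ) ≤ 1)]
    filter_upwards [ae_restrict_mem measurableSet_Ioc] with x hx
    have hx0 : 0 < x := hx.1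
    have hx1 : x ≤ 1 := hx.2
    have hlog : |Real.log x| = -Real.log x := abs_of_nonpos (Real.log_nonpos hx0.le hx1)
    have hb : -Real.log x ≤ 2 * x ^ (-(1/2) : ℝ) := by
      have h1 : Real.log (x ^ (-(1/2) : ℝ)) ≤ x ^ (-(1/2) : ℝ) - 1 :=
        Real.log_le_sub_one_of_pos (Real.rpow_pos_of_pos hx0 _)
      rw [Real.log_rpow hx0] at h1
      nlinarith [Real.rpow_pos_of_pos hx0 (-(1/2) : ℝ)]
    have hxi : x ^ i ≤ 1 := pow_le_one₀ hx0.le hx1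
    have hxj : (1 - x) ^ j ≤ 1 := pow_le_one₀ (by linarith) (by linarith)
    have hxi0 : 0 ≤ x ^ i := pow_nonneg hx0.le i
    have hxj0 : 0 ≤ (1 - x) ^ j := pow_nonneg (by linarith) j
    have hrp : (0:ℝ) < x ^ (-(1/2) : ℝ) := Real.rpow_pos_of_pos hx0 _
    simp only [Real.norm_eq_abs, abs_mul, hlog]
    rw [abs_of_nonneg hxi0, abs_of_nonneg hxj0, abs_of_nonneg (by norm_num : (0:ℝ) ≤ 2), abs_of_nonneg hrp.le]
    calc x ^ i * (1 - x) ^ j * (-Real.log x) ≤ 1 * 1 * (-Real.log x) := by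
          have : 0 ≤ -Real.log x := by rw [← hlog]; positivity
          gcongr
      _ = -Real.log x := by ring
      _ ≤ 2 * x ^ (-(1/2) : ℝ) := hb

lemma integral_pow_log (n : ℕ) :
    ∫ x in (0:ℝ)..1, x ^ n * Real.log x = -(1 / ((n : ℝ) + 1) ^ 2) := by
  set F : ℝ → ℝ := fun x => x ^ (n+1) * Real.log x / ((n:ℝ)+1) - x ^ (n+1) / ((n:ℝ)+1)^2 with hFdef
  have hn : ((n:ℝ)+1) ≠ 0 := by positivity
  have hFcont : Continuous F := by
    have : F = fun x => (x * Real.log x) * x ^ n / ((n:ℝ)+1) - x ^ (n+1) / ((n:ℝ)+1)^2 := by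
      funext x; simp only [hFdef]; ring
    rw [this]
    exact ((Real.continuous_mul_log.mul (continuous_pow n)).div_const _).sub
      ((continuous_pow (n+1)).div_const _)
  have hderiv : ∀ x ∈ Ioo (0:ℝ) 1, HasDerivAt F (x ^ n * Real.log x) x := by
    intro x hx
    have hx0 : x ≠ 0 := ne_of_gt hx.1
    have h1 : HasDerivAt (fun y : ℝ => y ^ (n+1) * Real.log y)
        (((n:ℝ)+1) * x ^ n * Real.log x + x ^ n) x := by
      have h := (hasDerivAt_pow (n+1) x).mul (Real.hasDerivAt_log hx0)
      refine h.congr_deriv ?_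
      rw [Nat.add_sub_cancel]
      push_cast
      field_simp
      ring
    have h2 := (h1.div_const ((n:ℝ)+1)).sub ((hasDerivAt_pow (n+1) x).div_const (((n:ℝ)+1)^2))
    refine h2.congr_deriv ?_
    rw [Nat.add_sub_cancel]
    push_cast
    field_simp
    ring
  have hint : IntervalIntegrable (fun x : ℝ => x ^ n * Real.log x) volume 0 1 := by
    have := aux_integrable n 0
    simpa using this
  have key := integral_eq_sub_of_hasDerivAt_of_le zero_le_one hFcont.continuousOn hderiv hint
  rw [key]
  simp only [hFdef, one_pow, Real.log_one, Real.log_zero, zero_pow (Nat.succ_ne_zero n)]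
  ring

lemma main_formula (j : ℕ) : ∀ i : ℕ, ∫ x in (0:ℝ)..1, x ^ i * (1 - x) ^ j * Real.log x
    = ((i.factorial : ℝ) * j.factorial / (i + j + 1).factorial) * (H i - H (i + j + 1)) := by
  induction j with
  | zero =>
    intro i
    have h1 : ∫ x in (0:ℝ)..1, x ^ i * (1 - x) ^ 0 * Real.log x
        = ∫ x in (0:ℝ)..1, x ^ i * Real.log x := by
      congr 1; funext x; ring
    rw [h1, integral_pow_log i, H_succ]
    have hfi : (i.factorial : ℝ) ≠ 0 := Nat.cast_ne_zero.2 i.factorial_ne_zero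
    have hi1 : ((i:ℝ)+1) ≠ 0 := by positivity
    rw [Nat.factorial_succ]
    push_cast
    field_simp
    ring
  | succ j ih =>
    intro i
    have split : (fun x : ℝ => x ^ i * (1 - x) ^ (j+1) * Real.log x)
        = fun x => x ^ i * (1 - x) ^ j * Real.log x - x ^ (i+1) * (1 - x) ^ j * Real.log x := by
      funext x; ring
    rw [split, intervalIntegral.integral_sub (aux_integrable i j) (aux_integrable (i+1) j),
      ih i, ih (i+1)]
    have e1 : i + (j + 1) + 1 = i + j + 2 := by ring
    have e2 : i + 1 + j + 1 = i + j + 2 := by ring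
    have e3 : i + j + 2 = (i + j + 1) + 1 := by ring
    rw [e1, e2, e3, H_succ (i + j + 1), H_succ i]
    have hfi : (i.factorial : ℝ) ≠ 0 := Nat.cast_ne_zero.2 i.factorial_ne_zero
    have hfj : (j.factorial : ℝ) ≠ 0 := Nat.cast_ne_zero.2 j.factorial_ne_zero
    have hfij : ((i + j + 1).factorial : ℝ) ≠ 0 := Nat.cast_ne_zero.2 (i + j + 1).factorial_ne_zero
    have hi1 : ((i:ℝ)+1) ≠ 0 := by positivity
    have hj1 : ((j:ℝ)+1) ≠ 0 := by positivity
    have hij2 : ((i:ℝ)+(j:ℝ)+2) ≠ 0 := by positivity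
    rw [show (i+j+1) + 1 = (i+j+1).succ from rfl, Nat.factorial_succ (i+j+1),
      Nat.factorial_succ j, Nat.factorial_succ i]
    push_cast
    field_simp
    ring

theorem stmt_0 (i j : ℕ) :
    Real.Gamma ((i : ℝ) + (j : ℝ) + 2) / (Real.Gamma ((i : ℝ) + 1) * Real.Gamma ((j : ℝ) + 1)) *
      ∫ x in (0:ℝ)..1, x ^ i * (1 - x) ^ j * Real.log x
    = H i - H (i + j + 1) := by
  have hG1 : Real.Gamma ((i : ℝ) + (j : ℝ) + 2) = ((i+j+1).factorial : ℝ) := by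
    have : ((i:ℝ) + (j:ℝ) + 2) = ((i+j+1 : ℕ) : ℝ) + 1 := by push_cast; ring
    rw [this, Real.Gamma_nat_eq_factorial]
  have hG2 : Real.Gamma ((i : ℝ) + 1) = (i.factorial : ℝ) := Real.Gamma_nat_eq_factorial i
  have hG3 : Real.Gamma ((j : ℝ) + 1) = (j.factorial : ℝ) := Real.Gamma_nat_eq_factorial j
  rw [hG1, hG2, hG3, main_formula j i]
  have hfi : (i.factorial : ℝ) ≠ 0 := Nat.cast_ne_zero.2 i.factorial_ne_zero
  have hfj : (j.factorial : ℝ) ≠ 0 := Nat.cast_ne_zero.2 j.factorial_ne_zero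
  have hfij : ((i + j + 1).factorial : ℝ) ≠ 0 := Nat.cast_ne_zero.2 (i + j + 1).factorial_ne_zero
  field_simp
end

section
/- For any finite binary tree x with n = #x nodes, the Wiener index WI(x) := (1/2) ∑_{(u,v) ∈ x×x} d(u,v), where d is the canonical graph distance d(u,v) = |u| + |v| − 2|u∧v|, satisfies WI(x) = n·IPL(x) + n² − ∑_{u ∈ x} σ(x,u)². -/
/-- Longest common prefix of two 0-1 sequences. -/
def lcp : List Bool → List Bool → List Bool
  | a :: as, b :: bs => if a = b then a :: lcp as bs else []
  | _, _ => []

/-- `subtreeSize x u` is the number of nodes of `x` having `u` as a prefix. -/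
def subtreeSize (x : Finset (List Bool)) (u : List Bool) : ℕ :=
  (x.filter fun v => u <+: v).card

/-- Internal path length: sum of the depths of the nodes. -/
def IPL (x : Finset (List Bool)) : ℕ := ∑ u ∈ x, u.length

lemma lcp_prefix_left : ∀ u v : List Bool, lcp u v <+: u := by
  intro u
  induction u with
  | nil => intro v; cases v <;> simp [lcp]
  | cons a as ih =>
    intro v
    cases v with
    | nil => simp [lcp]
    | cons b bs =>
      simp only [lcp]
      split
      · exact List.cons_prefix_cons.mpr ⟨rfl, ih bs⟩
      · exact List.nil_prefix

lemma lcp_prefix_right : ∀ u v : List Bool, lcp u v <+: v := by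
  intro u
  induction u with
  | nil => intro v; cases v <;> simp [lcp]
  | cons a as ih =>
    intro v
    cases v with
    | nil => simp [lcp]
    | cons b bs =>
      simp only [lcp]
      split
      · next h => subst h; exact List.cons_prefix_cons.mpr ⟨rfl, ih bs⟩
      · exact List.nil_prefix

lemma prefix_lcp : ∀ w u v : List Bool, w <+: u → w <+: v → w <+: lcp u v := by
  intro w
  induction w with
  | nil => intros; exact List.nil_prefix
  | cons c cs ih =>
    intro u v hu hv
    cases u with
    | nil => exact absurd hu (by simp)
    | cons a as =>
      cases v with
      | nil => exact absurd hv (by simp)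
      | cons b bs =>
        rw [List.cons_prefix_cons] at hu hv
        obtain ⟨rfl, hu⟩ := hu
        obtain ⟨rfl, hv⟩ := hv
        simp only [lcp, if_pos rfl]
        exact List.cons_prefix_cons.mpr ⟨rfl, ih _ _ hu hv⟩

lemma card_pref (x : Finset (List Bool))
    (hprefix : ∀ u ∈ x, ∀ v : List Bool, v <+: u → v ∈ x)
    (l : List Bool) (hl : l ∈ x) :
    (x.filter fun w => w ≠ [] ∧ w <+: l).card = l.length := by
  have himg : x.filter (fun w => w ≠ [] ∧ w <+: l)
      = (Finset.range l.length).image (fun k => l.take (k + 1)) := by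
    ext w
    simp only [Finset.mem_filter, Finset.mem_image, Finset.mem_range]
    constructor
    · rintro ⟨hw, hne, hpre⟩
      have hlen : w.length ≤ l.length := hpre.length_le
      have hpos : 0 < w.length := List.length_pos_iff.mpr hne
      refine ⟨w.length - 1, by omega, ?_⟩
      have : l.take w.length = w := (List.prefix_iff_eq_take.mp hpre).symm
      rw [Nat.sub_add_cancel hpos, this]
    · rintro ⟨k, hk, rfl⟩
      have hpre : l.take (k + 1) <+: l := List.take_prefix _ _
      refine ⟨hprefix l hl _ hpre, ?_, hpre⟩
      have : (l.take (k + 1)).length = k + 1 := by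
        rw [List.length_take]; omega
      intro h
      rw [h] at this
      simp at this
  rw [himg, Finset.card_image_of_injOn, Finset.card_range]
  intro a ha b hb h
  simp only [Finset.coe_range, Set.mem_Iio] at ha hb
  have ha' : (l.take (a + 1)).length = a + 1 := by rw [List.length_take]; omega
  have hb' : (l.take (b + 1)).length = b + 1 := by rw [List.length_take]; omega
  simp only [] at h; rw [h, hb'] at ha'
  omega

lemma lcp_length_eq (x : Finset (List Bool))
    (hprefix : ∀ u ∈ x, ∀ v : List Bool, v <+: u → v ∈ x)
    {u v : List Bool} (hu : u ∈ x) (hv : v ∈ x) :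
    (lcp u v).length = (x.filter fun w => w ≠ [] ∧ w <+: u ∧ w <+: v).card := by
  have hmem : lcp u v ∈ x := hprefix u hu _ (lcp_prefix_left u v)
  rw [show (x.filter fun w => w ≠ [] ∧ w <+: u ∧ w <+: v)
      = x.filter fun w => w ≠ [] ∧ w <+: lcp u v from ?_]
  · exact (card_pref x hprefix _ hmem).symm
  · apply Finset.filter_congr
    intro w _
    constructor
    · rintro ⟨hne, h1, h2⟩; exact ⟨hne, prefix_lcp w u v h1 h2⟩
    · rintro ⟨hne, h⟩
      exact ⟨hne, h.trans (lcp_prefix_left u v), h.trans (lcp_prefix_right u v)⟩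

lemma sum_lcp (x : Finset (List Bool))
    (hprefix : ∀ u ∈ x, ∀ v : List Bool, v <+: u → v ∈ x)
    (hne : ([] : List Bool) ∈ x) :
    (∑ u ∈ x, ∑ v ∈ x, (lcp u v).length) + x.card * x.card
      = ∑ w ∈ x, subtreeSize x w * subtreeSize x w := by
  have step1 : ∑ u ∈ x, ∑ v ∈ x, (lcp u v).length
      = ∑ w ∈ x, if w ≠ [] then subtreeSize x w * subtreeSize x w else 0 := by
    calc ∑ u ∈ x, ∑ v ∈ x, (lcp u v).length
        = ∑ u ∈ x, ∑ v ∈ x, ∑ w ∈ x,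
            if w ≠ [] ∧ w <+: u ∧ w <+: v then 1 else 0 := by
          refine Finset.sum_congr rfl fun u hu => Finset.sum_congr rfl fun v hv => ?_
          rw [lcp_length_eq x hprefix hu hv, Finset.card_filter]
      _ = ∑ u ∈ x, ∑ w ∈ x, ∑ v ∈ x,
            if w ≠ [] ∧ w <+: u ∧ w <+: v then 1 else 0 :=
          Finset.sum_congr rfl fun u _ => Finset.sum_comm
      _ = ∑ w ∈ x, ∑ u ∈ x, ∑ v ∈ x,
            if w ≠ [] ∧ w <+: u ∧ w <+: v then 1 else 0 := Finset.sum_comm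
      _ = ∑ w ∈ x, if w ≠ [] then subtreeSize x w * subtreeSize x w else 0 := by
          refine Finset.sum_congr rfl fun w hw => ?_
          by_cases hw0 : w = []
          · simp [hw0]
          · rw [if_pos hw0]
            have : ∀ u v : List Bool,
                (if w ≠ [] ∧ w <+: u ∧ w <+: v then 1 else 0)
                  = (if w <+: u then 1 else 0) * (if w <+: v then 1 else 0) := by
              intro u v
              by_cases h1 : w <+: u <;> by_cases h2 : w <+: v
              · rw [if_pos ⟨hw0, h1, h2⟩, if_pos h1, if_pos h2]
              · rw [if_neg (by tauto), if_pos h1, if_neg h2, mul_zero]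
              · rw [if_neg (by tauto), if_neg h1, if_pos h2, zero_mul]
              · rw [if_neg (by tauto), if_neg h1, if_neg h2, mul_zero]
            simp only [this]
            rw [← Finset.sum_mul_sum]
            have hσ : ∑ u ∈ x, (if w <+: u then 1 else 0) = subtreeSize x w := by
              rw [subtreeSize, Finset.card_filter]
            rw [hσ]
  have hsplit : ∑ w ∈ x, subtreeSize x w * subtreeSize x w
      = subtreeSize x [] * subtreeSize x [] +
        ∑ w ∈ x.erase [], subtreeSize x w * subtreeSize x w :=
    (Finset.add_sum_erase x _ hne).symm
  have hnil : subtreeSize x [] = x.card := by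
    simp [subtreeSize, Finset.filter_true_of_mem (fun v _ => List.nil_prefix)]
  have hite : ∑ w ∈ x, (if w ≠ [] then subtreeSize x w * subtreeSize x w else 0)
      = ∑ w ∈ x.erase [], subtreeSize x w * subtreeSize x w := by
    rw [← Finset.sum_filter, Finset.filter_ne']
  rw [step1]
  rw [hsplit]
  rw [hnil]
  rw [hite]
  exact Nat.add_comm _ _

theorem stmt_5 (x : Finset (List Bool))
    (hprefix : ∀ u ∈ x, ∀ v : List Bool, v <+: u → v ∈ x) :
    (1 / 2 : ℝ) * ∑ u ∈ x, ∑ v ∈ x,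
        ((u.length : ℝ) + (v.length : ℝ) - 2 * ((lcp u v).length : ℝ))
      = (x.card : ℝ) * (IPL x : ℝ) + (x.card : ℝ) ^ 2
        - ∑ u ∈ x, (subtreeSize x u : ℝ) ^ 2 := by
  rcases x.eq_empty_or_nonempty with rfl | ⟨l, hl⟩
  · simp [IPL]
  · have hnil : ([] : List Bool) ∈ x := hprefix l hl [] List.nil_prefix
    have hS := sum_lcp x hprefix hnil
    have hSR : (∑ u ∈ x, ∑ v ∈ x, ((lcp u v).length : ℝ)) + (x.card : ℝ) * x.card
        = ∑ w ∈ x, (subtreeSize x w : ℝ) * (subtreeSize x w : ℝ) := by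
      have := congrArg (Nat.cast : ℕ → ℝ) hS
      push_cast at this
      exact this
    have e1 : ∑ u ∈ x, ∑ v ∈ x,
          ((u.length : ℝ) + (v.length : ℝ) - 2 * ((lcp u v).length : ℝ))
        = (∑ u ∈ x, ∑ v ∈ x, (u.length : ℝ))
          + (∑ u ∈ x, ∑ v ∈ x, (v.length : ℝ))
          - 2 * ∑ u ∈ x, ∑ v ∈ x, ((lcp u v).length : ℝ) := by
      simp [Finset.sum_add_distrib, Finset.sum_sub_distrib, Finset.mul_sum]
    have e2 : ∑ u ∈ x, ∑ v ∈ x, (u.length : ℝ) = (x.card : ℝ) * (IPL x : ℝ) := by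
      simp only [Finset.sum_const, nsmul_eq_mul, IPL]
      push_cast
      rw [Finset.mul_sum]
    have e3 : ∑ u ∈ x, ∑ v ∈ x, (v.length : ℝ) = (x.card : ℝ) * (IPL x : ℝ) := by
      rw [Finset.sum_comm]; exact e2
    have e4 : ∑ u ∈ x, (subtreeSize x u : ℝ) ^ 2
        = ∑ w ∈ x, (subtreeSize x w : ℝ) * (subtreeSize x w : ℝ) := by
      simp [sq]
    rw [e1, e2, e3, e4]
    nlinarith [hSR]
end
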